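/- If T is a tree with at least 2 vertices, then mdim(T) equals the number of leaves of T. -/

import Mathlib

open SimpleGraph

variable {V : Type*}

/-- Distance from a vertex `w` to an (unordered) edge `e`:
the minimum of the distances to the two endpoints. -/
noncomputable def edgeVertexDist (G : SimpleGraph V) (w : V) (e : Sym2 V) : ℕ :=
  Sym2.lift ⟨fun a b => min (G.dist a w) (G.dist b w), fun a b => by simp [min_comm]⟩ e

/-- Distance from a vertex `w` to a mixed element (vertex or edge). -/
noncomputable def mixedDist (G : SimpleGraph V) (w : V) : V ⊕ G.edgeSet → ℕ
  | Sum.inl v => G.dist v w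
  | Sum.inr e => edgeVertexDist G w e.val

/-- `W` is a mixed resolving set: every two distinct mixed elements are
distinguished by the distance to some vertex of `W`. -/
def IsMixedResolving (G : SimpleGraph V) (W : Set V) : Prop :=
  ∀ x y : V ⊕ G.edgeSet, x ≠ y → ∃ w ∈ W, mixedDist G w x ≠ mixedDist G w y

/-- The mixed metric dimension of a finite graph. -/
noncomputable def mdim [Fintype V] (G : SimpleGraph V) : ℕ :=
  sInf {n | ∃ W : Finset V, W.card = n ∧ IsMixedResolving G ↑W}

/-- `y` is a maximal neighbor of `x`: `y` is a neighbor of `x` adjacent to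
every neighbor of `x` other than `y` itself. -/
def IsMaxNeighbor (G : SimpleGraph V) (x y : V) : Prop :=
  G.Adj x y ∧ ∀ z, G.Adj x z → z ≠ y → G.Adj y z

section Aux
variable {G : SimpleGraph V}

private lemma tree_path_length (hT : G.IsTree) {u v : V} {p : G.Walk u v} (hp : p.IsPath) :
    p.length = G.dist u v := by
  obtain ⟨q, hq, hql⟩ := hT.isConnected.exists_path_of_dist u v
  rw [(hT.existsUnique_path u v).unique hp hq, hql]

private lemma dist_add_of_mem (hT : G.IsTree) {u v x : V} {p : G.Walk u v} (hp : p.IsPath)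
    (hx : x ∈ p.support) : G.dist u x + G.dist x v = G.dist u v := by
  classical
  have h1 := hp.takeUntil hx
  have h2 := hp.dropUntil hx
  have h3 := congrArg Walk.length (p.take_spec hx)
  rw [Walk.length_append] at h3
  rw [← tree_path_length hT hp, ← tree_path_length hT h1, ← tree_path_length hT h2, h3]

private lemma adj_dist (hT : G.IsTree) {a b : V} (hab : G.Adj a b) (w : V) :
    G.dist w a + 1 = G.dist w b ∨ G.dist w b + 1 = G.dist w a := by
  obtain ⟨p, hp, hpl⟩ := hT.isConnected.exists_path_of_dist w a
  by_cases hb : b ∈ p.support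
  · right
    have h1 := dist_add_of_mem hT hp hb
    have h2 : G.dist b a = 1 := dist_eq_one_iff_adj.mpr hab.symm
    omega
  · left
    have hq : (p.concat hab).IsPath := by
      rw [Walk.isPath_def, Walk.support_concat]
      simp [List.concat_eq_append, List.nodup_append, hp.support_nodup, hb]
      exact fun x hx hxb => hb (hxb ▸ hx)
    have h3 := tree_path_length hT hq
    rw [Walk.length_concat, hpl] at h3
    omega

private lemma parent_unique (hT : G.IsTree) {v w z₁ z₂ : V}
    (h1 : G.Adj w z₁ ∧ G.dist v z₁ + 1 = G.dist v w)
    (h2 : G.Adj w z₂ ∧ G.dist v z₂ + 1 = G.dist v w) : z₁ = z₂ := by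
  have key : ∀ z : V, ∀ h : G.Adj z w, G.dist v z + 1 = G.dist v w →
      ∃ p : G.Walk v z, p.IsPath ∧ (p.concat h).IsPath := by
    intro z h hd
    obtain ⟨p, hp, hpl⟩ := hT.isConnected.exists_path_of_dist v z
    refine ⟨p, hp, ?_⟩
    have hw : w ∉ p.support := by
      intro hmem
      have h4 := dist_add_of_mem hT hp hmem
      have h5 : G.dist w z = 1 := dist_eq_one_iff_adj.mpr h.symm
      omega
    rw [Walk.isPath_def, Walk.support_concat]
    simp [List.concat_eq_append, List.nodup_append, hp.support_nodup, hw]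
    exact fun x hx hxw => hw (hxw ▸ hx)
  obtain ⟨p₁, hp₁, hq₁⟩ := key z₁ h1.1.symm h1.2
  obtain ⟨p₂, hp₂, hq₂⟩ := key z₂ h2.1.symm h2.2
  have heq := (hT.existsUnique_path v w).unique hq₁ hq₂
  obtain ⟨hv, -⟩ := Walk.concat_inj heq
  exact hv

private lemma parent_exists (hT : G.IsTree) {v w : V} (hvw : v ≠ w) :
    ∃ z, G.Adj w z ∧ G.dist v z + 1 = G.dist v w := by
  obtain ⟨p, hp, hpl⟩ := hT.isConnected.exists_path_of_dist v w
  have hd : G.dist v w ≠ 0 := fun h0 => hvw (hT.isConnected.dist_eq_zero_iff.mp h0)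
  have hnn : ¬ p.reverse.Nil := by
    rw [Walk.nil_iff_length_eq, Walk.length_reverse, hpl]; exact hd
  obtain ⟨z, hadj, t, ht⟩ := Walk.not_nil_iff.mp hnn
  have htp : t.IsPath := by
    have := hp.reverse
    rw [ht] at this
    exact this.of_cons
  have htl := tree_path_length hT htp
  have hlen : t.length + 1 = G.dist v w := by
    have := congrArg Walk.length ht
    rw [Walk.length_reverse, hpl, Walk.length_cons] at this
    omega
  refine ⟨z, hadj, ?_⟩
  rw [SimpleGraph.dist_comm]
  omega

private lemma exists_leaf_between [Fintype V] [DecidableRel G.Adj] (hT : G.IsTree)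
    {u v : V} (huv : u ≠ v) :
    ∃ w, G.degree w = 1 ∧ G.dist v w = G.dist v u + G.dist u w := by
  classical
  set S := Finset.univ.filter (fun w => G.dist v w = G.dist v u + G.dist u w) with hS
  have huS : u ∈ S := by simp [hS]
  obtain ⟨w, hwS, hmax⟩ := S.exists_max_image (fun w => G.dist v w) ⟨u, huS⟩
  rw [hS, Finset.mem_filter] at hwS
  have hw : G.dist v w = G.dist v u + G.dist u w := hwS.2
  have hvu : G.dist v u ≠ 0 := fun h0 => huv (hT.isConnected.dist_eq_zero_iff.mp h0).symm
  have hvw : v ≠ w := by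
    rintro rfl
    have h0 : G.dist v v = 0 := SimpleGraph.dist_self
    omega
  obtain ⟨z, hz, hzd⟩ := parent_exists hT hvw
  have hnb : G.neighborFinset w = {z} := by
    ext t
    simp only [mem_neighborFinset, Finset.mem_singleton]
    constructor
    · intro ht
      rcases adj_dist hT ht v with hc | hc
      · exfalso
        have hwt : G.dist w t = 1 := dist_eq_one_iff_adj.mpr ht
        have h1 : G.dist u t ≤ G.dist u w + G.dist w t := hT.isConnected.dist_triangle
        have h2 : G.dist v t ≤ G.dist v u + G.dist u t := hT.isConnected.dist_triangle
        have h3 : t ∈ S := by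
          simp only [hS, Finset.mem_filter, Finset.mem_univ, true_and]
          omega
        have h4 := hmax t h3
        omega
      · exact parent_unique hT ⟨ht, hc⟩ ⟨hz, hzd⟩
    · rintro rfl; exact hz
  refine ⟨w, ?_, hw⟩
  show (G.neighborFinset w).card = 1
  rw [hnb, Finset.card_singleton]

private lemma mem_support_aux (hT : G.IsTree) :
    ∀ (n : ℕ) (a c : V), G.dist a c = n → ∀ (b : V), G.dist a c = G.dist a b + G.dist b c →
    ∀ (p : G.Walk a c), p.IsPath → b ∈ p.support := by
  intro n
  induction n with
  | zero =>
    intro a c hn b hb p hp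
    have h0 : G.dist a b = 0 := by omega
    have : a = b := hT.isConnected.dist_eq_zero_iff.mp h0
    subst this
    exact p.start_mem_support
  | succ n ih =>
    intro a c hn b hb p hp
    by_cases hab : a = b
    · subst hab; exact p.start_mem_support
    have hd_ab : G.dist a b ≠ 0 := fun h0 => hab (hT.isConnected.dist_eq_zero_iff.mp h0)
    have hac : a ≠ c := by
      rintro rfl
      have h0 : G.dist a a = 0 := SimpleGraph.dist_self
      omega
    cases p with
    | nil => exact absurd rfl hac
    | @cons _ a₂ _ hadj t =>
      have htp : t.IsPath := hp.of_cons
      have htl : t.length = G.dist a₂ c := tree_path_length hT htp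
      have hpl : t.length + 1 = G.dist a c := by
        have h := tree_path_length hT hp
        rw [Walk.length_cons] at h
        omega
      obtain ⟨z, hzadj, hzd⟩ := parent_exists hT (show b ≠ a from Ne.symm hab)
      have c1 : G.dist b a = G.dist a b := SimpleGraph.dist_comm
      have c2 : G.dist z b = G.dist b z := SimpleGraph.dist_comm
      have h1 : G.dist z c ≤ G.dist z b + G.dist b c := hT.isConnected.dist_triangle
      have h2 : G.dist a c ≤ G.dist a z + G.dist z c := hT.isConnected.dist_triangle
      have haz : G.dist a z = 1 := dist_eq_one_iff_adj.mpr hzadj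
      have hzc : G.dist z c + 1 = G.dist a c := by omega
      have c3 : G.dist c z = G.dist z c := SimpleGraph.dist_comm
      have c4 : G.dist c a = G.dist a c := SimpleGraph.dist_comm
      have c5 : G.dist c a₂ = G.dist a₂ c := SimpleGraph.dist_comm
      have hza : z = a₂ :=
        parent_unique hT (v := c) (w := a) ⟨hzadj, by omega⟩ ⟨hadj, by omega⟩
      subst hza
      have hrec : G.dist z c = G.dist z b + G.dist b c := by omega
      have hmem := ih z c (by omega) b hrec t htp
      rw [Walk.support_cons]
      exact List.mem_cons_of_mem _ hmem

private lemma between_trans (hT : G.IsTree) {w u v x : V} (huv : u ≠ v)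
    (h1 : G.dist w v = G.dist w u + G.dist u v)
    (h2 : G.dist u x = G.dist u v + G.dist v x) :
    G.dist w x = G.dist w u + G.dist u v + G.dist v x := by
  classical
  obtain ⟨p, hp, hpl⟩ := hT.isConnected.exists_path_of_dist w v
  obtain ⟨q, hq, hql⟩ := hT.isConnected.exists_path_of_dist u x
  have hu : u ∈ p.support := mem_support_aux hT _ w v rfl u h1 p hp
  have hv : v ∈ q.support := mem_support_aux hT _ u x rfl v h2 q hq
  have hq'p : (q.dropUntil v hv).IsPath := hq.dropUntil hv
  have hq'l : (q.dropUntil v hv).length = G.dist v x := tree_path_length hT hq'p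
  have huv' : G.dist u v ≠ 0 := fun h0 => huv (hT.isConnected.dist_eq_zero_iff.mp h0)
  have hdisj : ∀ y ∈ p.support, y ∈ (q.dropUntil v hv).support → y = v := by
    intro y hyp hyq
    by_contra hyv
    have e1 : G.dist w y + G.dist y v = G.dist w v := dist_add_of_mem hT hp hyp
    have e2 : G.dist v y + G.dist y x = G.dist v x := dist_add_of_mem hT hq'p hyq
    have e3 : G.dist u x ≤ G.dist u y + G.dist y x := hT.isConnected.dist_triangle
    have hvy : G.dist v y ≠ 0 := fun h0 => hyv ((hT.isConnected.dist_eq_zero_iff.mp h0)).symm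
    have cyv : G.dist y v = G.dist v y := SimpleGraph.dist_comm
    have hy2 : y ∈ (p.takeUntil u hu).support ∨ y ∈ (p.dropUntil u hu).support := by
      rw [← Walk.mem_support_append_iff, p.take_spec hu]; exact hyp
    rcases hy2 with hy2 | hy2
    · have e4 : G.dist w y + G.dist y u = G.dist w u := dist_add_of_mem hT (hp.takeUntil hu) hy2
      have e5 : G.dist u y = G.dist y u := SimpleGraph.dist_comm
      omega
    · have e4 : G.dist u y + G.dist y v = G.dist u v := dist_add_of_mem hT (hp.dropUntil hu) hy2
      have e5 : G.dist u y = G.dist y u := SimpleGraph.dist_comm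
      omega
  have hr : (p.append (q.dropUntil v hv)).IsPath := by
    rw [Walk.isPath_def, Walk.support_append]
    refine List.Nodup.append hp.support_nodup (hq'p.support_nodup.tail) ?_
    intro y hyp hyq
    have hyq' : y ∈ (q.dropUntil v hv).support := List.mem_of_mem_tail hyq
    have : y = v := hdisj y hyp hyq'
    subst this
    have hnodup := hq'p.support_nodup
    rw [Walk.support_eq_cons] at hnodup
    exact (List.nodup_cons.mp hnodup).1 hyq
  have hfin := tree_path_length hT hr
  rw [Walk.length_append, hpl, hq'l] at hfin
  omega

variable [Fintype V] [DecidableRel G.Adj]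

private lemma resolve_vv (hT : G.IsTree) {u v : V} (huv : u ≠ v) :
    ∃ w, G.degree w = 1 ∧ G.dist u w ≠ G.dist v w := by
  obtain ⟨w, hw, hd⟩ := exists_leaf_between hT huv
  have h0 : G.dist v u ≠ 0 := fun h0 => huv ((hT.isConnected.dist_eq_zero_iff.mp h0)).symm
  exact ⟨w, hw, by omega⟩

private lemma resolve_endpoint (hT : G.IsTree) {a b : V} (hab : G.Adj a b) :
    ∃ w, G.degree w = 1 ∧ G.dist a w ≠ min (G.dist a w) (G.dist b w) := by
  obtain ⟨w, hw, hd⟩ := exists_leaf_between hT hab.ne'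
  have h1 : G.dist a b = 1 := dist_eq_one_iff_adj.mpr hab
  refine ⟨w, hw, ?_⟩
  have hmin : min (G.dist a w) (G.dist b w) = G.dist b w := min_eq_right (by omega)
  omega

private lemma resolve_ve_far (hT : G.IsTree) {u a b : V} (hab : G.Adj a b)
    (hfar : G.dist u a + 1 = G.dist u b) (hua : u ≠ a) (hub : u ≠ b) :
    ∃ w, G.degree w = 1 ∧ G.dist u w ≠ min (G.dist a w) (G.dist b w) := by
  obtain ⟨w, hw, hd⟩ := exists_leaf_between hT hub
  have h1 : G.dist u a ≠ 0 := fun h0 => hua (hT.isConnected.dist_eq_zero_iff.mp h0)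
  have h2 : G.dist b u = G.dist u b := SimpleGraph.dist_comm
  have h3 : G.dist b w ≤ G.dist b a + G.dist a w := hT.isConnected.dist_triangle
  have h4 : G.dist b a = 1 := dist_eq_one_iff_adj.mpr hab.symm
  refine ⟨w, hw, ?_⟩
  have hminb : G.dist u w < G.dist b w := by omega
  have hmina : G.dist u w < G.dist a w := by omega
  exact (lt_min hmina hminb).ne

private lemma resolve_ve (hT : G.IsTree) (u : V) {a b : V} (hab : G.Adj a b) :
    ∃ w, G.degree w = 1 ∧ G.dist u w ≠ min (G.dist a w) (G.dist b w) := by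
  by_cases hua : u = a
  · subst hua; exact resolve_endpoint hT hab
  by_cases hub : u = b
  · subst hub
    obtain ⟨w, hw, hne⟩ := resolve_endpoint hT hab.symm
    exact ⟨w, hw, by rwa [min_comm] at hne⟩
  rcases adj_dist hT hab u with hc | hc
  · exact resolve_ve_far hT hab hc hua hub
  · obtain ⟨w, hw, hne⟩ := resolve_ve_far hT hab.symm hc hub hua
    exact ⟨w, hw, by rwa [min_comm] at hne⟩

private lemma resolve_ee (hT : G.IsTree) {a b c d : V} (hab : G.Adj a b)
    (hda : d ≠ a) (hfar : G.dist d a + 1 = G.dist d b) :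
    ∃ w, G.degree w = 1 ∧ min (G.dist a w) (G.dist b w) ≠ min (G.dist c w) (G.dist d w) := by
  obtain ⟨w, hw, h1⟩ := exists_leaf_between hT hda
  have had : G.dist a d ≠ 0 := fun h0 => hda ((hT.isConnected.dist_eq_zero_iff.mp h0)).symm
  have hab1 : G.dist a b = 1 := dist_eq_one_iff_adj.mpr hab
  have cwa : G.dist w a = G.dist a w := SimpleGraph.dist_comm
  have cwd : G.dist w d = G.dist d w := SimpleGraph.dist_comm
  have cda : G.dist d a = G.dist a d := SimpleGraph.dist_comm
  have h1' : G.dist w a = G.dist w d + G.dist d a := by omega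
  have h2' : G.dist d b = G.dist d a + G.dist a b := by omega
  have hb := between_trans hT hda h1' h2'
  have cwb : G.dist w b = G.dist b w := SimpleGraph.dist_comm
  refine ⟨w, hw, ?_⟩
  have hcw : min (G.dist c w) (G.dist d w) ≤ G.dist d w := min_le_right _ _
  have hgt : G.dist d w < min (G.dist a w) (G.dist b w) := lt_min (by omega) (by omega)
  omega

private lemma resolve_ee' (hT : G.IsTree) {a b c d : V} (hab : G.Adj a b)
    (hda : d ≠ a) (hdb : d ≠ b) :
    ∃ w, G.degree w = 1 ∧ min (G.dist a w) (G.dist b w) ≠ min (G.dist c w) (G.dist d w) := by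
  rcases adj_dist hT hab d with hc | hc
  · exact resolve_ee hT hab hda hc
  · obtain ⟨w, hw, h⟩ := resolve_ee hT hab.symm hdb hc
    exact ⟨w, hw, by rwa [min_comm (G.dist b w)] at h⟩

private lemma leaf_mem_resolving (hT : G.IsTree) {W : Set V} (hW : IsMixedResolving G W)
    {x : V} (hx : G.degree x = 1) : x ∈ W := by
  obtain ⟨y, hy⟩ := Finset.card_eq_one.mp (show (G.neighborFinset x).card = 1 from hx)
  have hadj : G.Adj x y := by
    rw [← mem_neighborFinset, hy]; exact Finset.mem_singleton_self y
  have he : s(x, y) ∈ G.edgeSet := hadj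
  obtain ⟨w, hwW, hne⟩ := hW (Sum.inl y) (Sum.inr ⟨s(x, y), he⟩) (by simp)
  have hne' : G.dist y w ≠ min (G.dist x w) (G.dist y w) := hne
  by_cases hwx : w = x
  · subst hwx; exact hwW
  exfalso
  obtain ⟨z, hz, hzd⟩ := parent_exists hT (show w ≠ x from hwx)
  have hzy : z = y := by
    have hmem : z ∈ G.neighborFinset x := by rw [mem_neighborFinset]; exact hz
    rw [hy, Finset.mem_singleton] at hmem
    exact hmem
  rw [hzy] at hzd
  have c1 : G.dist x w = G.dist w x := SimpleGraph.dist_comm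
  have c2 : G.dist y w = G.dist w y := SimpleGraph.dist_comm
  exact hne' ((min_eq_right (by omega)).symm)

end Aux

/-- The mixed metric dimension of a tree with at least two vertices equals its
number of leaves. -/
theorem stmt_16 [Fintype V] (G : SimpleGraph V) [DecidableRel G.Adj]
    (hT : G.IsTree) (hn : 2 ≤ Fintype.card V) :
    mdim G = (Finset.univ.filter fun v : V => G.degree v = 1).card := by
  classical
  set L : Finset V := Finset.univ.filter (fun v : V => G.degree v = 1) with hL
  have hmemL : ∀ w : V, G.degree w = 1 → w ∈ (↑L : Set V) := by
    intro w hw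
    simp [hL, hw]
  have hres : IsMixedResolving G ↑L := by
    rintro (u | ⟨e₁, he₁⟩) (v | ⟨e₂, he₂⟩) hxy
    · have huv : u ≠ v := fun h => hxy (by rw [h])
      obtain ⟨w, hw, h⟩ := resolve_vv hT huv
      exact ⟨w, hmemL w hw, h⟩
    · clear hxy
      revert he₂
      induction e₂ using Sym2.ind with | _ a b =>
      intro he₂
      obtain ⟨w, hw, h⟩ := resolve_ve hT u ((SimpleGraph.mem_edgeSet G).mp he₂)
      exact ⟨w, hmemL w hw, h⟩
    · clear hxy
      revert he₁
      induction e₁ using Sym2.ind with | _ a b =>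
      intro he₁
      obtain ⟨w, hw, h⟩ := resolve_ve hT v ((SimpleGraph.mem_edgeSet G).mp he₁)
      exact ⟨w, hmemL w hw, h.symm⟩
    · have hne : e₁ ≠ e₂ := by
        intro h
        exact hxy (by rw [Sum.inr.injEq]; exact Subtype.ext h)
      clear hxy
      revert he₁ he₂ hne
      induction e₁ using Sym2.ind with | _ a b =>
      induction e₂ using Sym2.ind with | _ c d =>
      intro he₁ he₂ hne
      have hab : G.Adj a b := (SimpleGraph.mem_edgeSet G).mp he₁
      have hcd : G.Adj c d := (SimpleGraph.mem_edgeSet G).mp he₂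
      by_cases hd1 : d ≠ a ∧ d ≠ b
      · obtain ⟨w, hw, h⟩ := resolve_ee' (c := c) hT hab hd1.1 hd1.2
        exact ⟨w, hmemL w hw, h⟩
      by_cases hc1 : c ≠ a ∧ c ≠ b
      · obtain ⟨w, hw, h⟩ := resolve_ee' (c := d) hT hab hc1.1 hc1.2
        refine ⟨w, hmemL w hw, ?_⟩
        have h' : min (G.dist a w) (G.dist b w) ≠ min (G.dist c w) (G.dist d w) := by
          rwa [min_comm (G.dist d w)] at h
        exact h'
      · exfalso
        push_neg at hd1 hc1
        apply hne
        by_cases hda : d = a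
        · have hcb : c = b := by
            rcases Classical.em (c = a) with h' | h'
            · exact absurd (h' ▸ hda ▸ rfl : c = d) hcd.ne
            · exact hc1 h'
          rw [hda, hcb, Sym2.eq_swap]
        · have hdb : d = b := hd1 hda
          have hca : c = a := by
            rcases Classical.em (c = a) with h' | h'
            · exact h'
            · exact absurd ((hc1 h') ▸ hdb ▸ rfl : c = d) hcd.ne
          rw [hdb, hca]
  have hSmem : L.card ∈ {n | ∃ W : Finset V, W.card = n ∧ IsMixedResolving G ↑W} :=
    ⟨L, rfl, hres⟩
  have hub : mdim G ≤ L.card := Nat.sInf_le hSmem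
  have hmd : mdim G = sInf {n | ∃ W : Finset V, W.card = n ∧ IsMixedResolving G ↑W} := rfl
  have hlb : L.card ≤ mdim G := by
    obtain ⟨W, hWc, hWr⟩ :=
      Nat.sInf_mem (⟨L.card, hSmem⟩ :
        Set.Nonempty {n | ∃ W : Finset V, W.card = n ∧ IsMixedResolving G ↑W})
    have hsub : L ⊆ W := by
      intro x hx
      rw [hL, Finset.mem_filter] at hx
      exact Finset.mem_coe.mp (leaf_mem_resolving hT hWr hx.2)
    calc L.card ≤ W.card := Finset.card_le_card hsub
      _ = mdim G := by rw [hWc, hmd]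
  omega
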